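/- Let Q be the standard positive definite form on Rⁿ and Cl(n) the Clifford algebra with eᵢ² = -1. Then on the subspace H spanned by the e_I with |I| ≡ 1, 2 (mod 4) and e_I ≠ ω, the Killing form B is negative definite and the canonical bilinear form Q̄ is positive definite (indeed e_I² = -1 and Q̄(e_I,e_I) = 1 for all such e_I). -/

import Mathlib

open CliffordAlgebra

section Defs

variable {F V : Type*} [Field F] [AddCommGroup V] [Module F V]

/-- The monomial `e_I` associated to a multi-index `I`, realized as a finite set of
indices multiplied in increasing order (with `e_∅ = 1`). -/
noncomputable def eI (Qf : QuadraticForm F V) {n : ℕ} (b : Module.Basis (Fin n) F V)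
    (s : Finset (Fin n)) : CliffordAlgebra Qf :=
  ((s.sort (· ≤ ·)).map fun i => ι Qf (b i)).prod

/-- The conjugation anti-automorphism `c = α ∘ τ` of the Clifford algebra. -/
noncomputable def cconj (Qf : QuadraticForm F V) :
    CliffordAlgebra Qf →ₗ[F] CliffordAlgebra Qf :=
  involute.toLinearMap ∘ₗ (reverse (Q := Qf))

/-- The canonical bilinear form `Q̄(x,y) = p(x · c(y))`, where `p` is the scalar-component
projection determined by a monomial basis `bas` (indexed by multi-indices, with
`bas s = e_s`, in particular `bas ∅ = 1`). -/
noncomputable def Qbar {Qf : QuadraticForm F V} {n : ℕ}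
    (bas : Module.Basis (Finset (Fin n)) F (CliffordAlgebra Qf))
    (x y : CliffordAlgebra Qf) : F :=
  bas.coord ∅ (x * cconj Qf y)

/-- The Lie algebra `G = {ξ : c(ξ) = -ξ}` of infinitesimal isometries, as a submodule. -/
noncomputable def Gsub (Qf : QuadraticForm F V) : Submodule F (CliffordAlgebra Qf) :=
  LinearMap.ker (cconj Qf + LinearMap.id)

end Defs

section Work

variable {n : ℕ}
  {B : LinearMap.BilinForm ℝ (Fin n → ℝ)}
  {Qf : QuadraticForm ℝ (Fin n → ℝ)}
  {b : Module.Basis (Fin n) ℝ (Fin n → ℝ)}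

/-- product of generators along a list -/
noncomputable def pm (Qf : QuadraticForm ℝ (Fin n → ℝ)) (b : Module.Basis (Fin n) ℝ (Fin n → ℝ))
    (l : List (Fin n)) : CliffordAlgebra Qf :=
  (l.map fun i => ι Qf (b i)).prod

lemma pm_nil : pm Qf b [] = 1 := rfl

lemma pm_cons (i : Fin n) (l : List (Fin n)) :
    pm Qf b (i :: l) = ι Qf (b i) * pm Qf b l := by
  simp [pm]

lemma pm_append (l₁ l₂ : List (Fin n)) :
    pm Qf b (l₁ ++ l₂) = pm Qf b l₁ * pm Qf b l₂ := by
  simp [pm]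

lemma eI_eq_pm (s : Finset (Fin n)) : eI Qf b s = pm Qf b (s.sort (· ≤ ·)) := rfl

section Basic
variable (hQ : ∀ v, Qf v = -(B v v)) (hb : ∀ i j : Fin n, B (b i) (b j) = if i = j then 1 else 0)
include hQ hb

lemma Qf_b (i : Fin n) : Qf (b i) = -1 := by
  rw [hQ, hb]; simp

lemma msq (i : Fin n) : ι Qf (b i) * ι Qf (b i) = -1 := by
  rw [ι_sq_scalar, Qf_b hQ hb, map_neg, map_one]

lemma hOrtho {i j : Fin n} (h : i ≠ j) : Qf.IsOrtho (b i) (b j) := by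
  rw [QuadraticMap.isOrtho_def, hQ, hQ, hQ]
  have : B (b i + b j) (b i + b j) = B (b i) (b i) + B (b i) (b j) + B (b j) (b i) + B (b j) (b j) := by
    simp [map_add]; ring
  rw [this, hb i j, hb j i, if_neg h, if_neg (Ne.symm h)]
  ring

lemma manti {i j : Fin n} (h : i ≠ j) :
    ι Qf (b i) * ι Qf (b j) = -(ι Qf (b j) * ι Qf (b i)) :=
  ι_mul_ι_comm_of_isOrtho (hOrtho hQ hb h)

end Basic
end Work

section Work2

variable {n : ℕ}
  {B : LinearMap.BilinForm ℝ (Fin n → ℝ)}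
  {Qf : QuadraticForm ℝ (Fin n → ℝ)}
  {b : Module.Basis (Fin n) ℝ (Fin n → ℝ)}
  (hQ : ∀ v, Qf v = -(B v v)) (hb : ∀ i j : Fin n, B (b i) (b j) = if i = j then 1 else 0)
include hQ hb

lemma L_move {i : Fin n} {l : List (Fin n)} (hi : i ∉ l) :
    ι Qf (b i) * pm Qf b l = ((-1 : ℝ) ^ l.length) • (pm Qf b l * ι Qf (b i)) := by
  induction l with
  | nil => simp [pm_nil]
  | cons a t ih =>
    have hia : i ≠ a := fun h => hi (h ▸ List.mem_cons_self (a := a) (l := t))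
    have hit : i ∉ t := fun h => hi (List.mem_cons_of_mem a h)
    rw [pm_cons, ← mul_assoc, manti hQ hb hia, neg_mul, mul_assoc, ih hit]
    rw [List.length_cons, pow_succ]
    simp [mul_smul, mul_assoc]

lemma L_telescope (l : List (Fin n)) :
    pm Qf b l * pm Qf b l.reverse = ((-1 : ℝ) ^ l.length) • 1 := by
  induction l with
  | nil => simp [pm_nil]
  | cons a t ih =>
    rw [List.reverse_cons, pm_cons, pm_append, mul_assoc]
    rw [show pm Qf b t * (pm Qf b t.reverse * pm Qf b [a]) =
      (pm Qf b t * pm Qf b t.reverse) * pm Qf b [a] by rw [mul_assoc], ih]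
    have : pm Qf b [a] = ι Qf (b a) := by simp [pm]
    rw [this, smul_mul_assoc, one_mul, mul_smul_comm, msq hQ hb a, List.length_cons, pow_succ,
      smul_neg, ← smul_smul]
    simp

lemma L_perm {l₁ l₂ : List (Fin n)} (h : l₁.Perm l₂) (hnd : l₁.Nodup) :
    ∃ c : ℝ, (c = 1 ∨ c = -1) ∧ pm Qf b l₁ = c • pm Qf b l₂ := by
  induction h with
  | nil => exact ⟨1, Or.inl rfl, by simp⟩
  | cons x h ih =>
    obtain ⟨c, hc, he⟩ := ih (List.Nodup.of_cons hnd)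
    exact ⟨c, hc, by rw [pm_cons, pm_cons, he, mul_smul_comm]⟩
  | swap x y l =>
    have hxy : y ≠ x := by
      intro h; exact (List.nodup_cons.1 hnd).1 (h ▸ List.mem_cons_self (a := x) (l := l))
    refine ⟨-1, Or.inr rfl, ?_⟩
    rw [pm_cons, pm_cons, pm_cons, pm_cons, ← mul_assoc, ← mul_assoc,
      manti hQ hb hxy]
    simp
  | trans h₁ h₂ ih₁ ih₂ =>
    obtain ⟨c₁, hc₁, he₁⟩ := ih₁ hnd
    obtain ⟨c₂, hc₂, he₂⟩ := ih₂ (hnd.perm h₁)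
    refine ⟨c₁ * c₂, ?_, by rw [he₁, he₂, smul_smul]⟩
    rcases hc₁ with rfl | rfl <;> rcases hc₂ with rfl | rfl <;> simp

lemma L_rev {l : List (Fin n)} (hnd : l.Nodup) :
    pm Qf b l.reverse = ((-1 : ℝ) ^ (l.length.choose 2)) • pm Qf b l := by
  induction l with
  | nil => simp [pm_nil]
  | cons a t ih =>
    have hat : a ∉ t := (List.nodup_cons.1 hnd).1
    have ht : t.Nodup := (List.nodup_cons.1 hnd).2
    rw [List.reverse_cons, pm_append, ih ht]
    have h1 : pm Qf b [a] = ι Qf (b a) := by simp [pm]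
    rw [h1, smul_mul_assoc]
    have h2 : pm Qf b t * ι Qf (b a) = ((-1 : ℝ) ^ t.length) • (ι Qf (b a) * pm Qf b t) := by
      rw [L_move hQ hb hat, smul_smul]
      rcases Nat.even_or_odd t.length with he | ho
      · rw [he.neg_one_pow]; simp
      · rw [ho.neg_one_pow]; simp
    rw [h2, smul_smul, ← pm_cons, List.length_cons]
    congr 1
    rw [← pow_add, Nat.choose_succ_succ, Nat.choose_one_right, Nat.add_comm]

lemma cconj_mul (x y : CliffordAlgebra Qf) :
    cconj Qf (x * y) = cconj Qf y * cconj Qf x := by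
  simp [cconj, CliffordAlgebra.reverse.map_mul, map_mul]

lemma cconj_one : cconj Qf (1 : CliffordAlgebra Qf) = 1 := by
  simp [cconj]

lemma cconj_ι (v : Fin n → ℝ) : cconj Qf (ι Qf v) = -(ι Qf v) := by
  simp [cconj, reverse_ι]

lemma cconj_pm (l : List (Fin n)) :
    cconj Qf (pm Qf b l) = ((-1 : ℝ) ^ l.length) • pm Qf b l.reverse := by
  induction l with
  | nil => simp [pm_nil, cconj_one hQ hb]
  | cons a t ih =>
    rw [pm_cons, cconj_mul hQ hb, ih, cconj_ι hQ hb, List.reverse_cons, pm_append,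
      List.length_cons, pow_succ]
    have : pm Qf b [a] = ι Qf (b a) := by simp [pm]
    rw [this, smul_mul_assoc]
    rw [mul_neg, smul_neg, ← neg_one_smul ℝ (((-1:ℝ) ^ t.length) • _), smul_smul]
    congr 1
    ring

end Work2

open scoped symmDiff

section Parity

lemma choose2_succ (m : ℕ) : (m+1).choose 2 = m.choose 2 + m := by
  rw [show (2:ℕ) = 1+1 from rfl, Nat.choose_succ_succ, Nat.choose_one_right, Nat.add_comm]

lemma sign4 (k : ℕ) :
    ((-1 : ℝ) ^ (k.choose 2 + k)) = if k % 4 = 1 ∨ k % 4 = 2 then -1 else 1 := by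
  induction k using Nat.strong_induction_on with
  | _ k ih =>
    match k, ih with
    | 0, _ => norm_num
    | 1, _ => norm_num [Nat.choose]
    | 2, _ => norm_num [Nat.choose]
    | 3, _ => norm_num [Nat.choose]
    | (k+4), ih =>
      have he : (k+4).choose 2 + (k+4) = (k.choose 2 + k) + (4*k + 10) := by
        have h1 : (k+4).choose 2 = (k+3).choose 2 + (k+3) := choose2_succ (k+3)
        have h2 : (k+3).choose 2 = (k+2).choose 2 + (k+2) := choose2_succ (k+2)
        have h3 : (k+2).choose 2 = (k+1).choose 2 + (k+1) := choose2_succ (k+1)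
        have h4 : (k+1).choose 2 = k.choose 2 + k := choose2_succ k
        omega
      have hmod : (k+4) % 4 = k % 4 := by omega
      rw [he, pow_add, ih k (by omega), hmod]
      have : ((-1:ℝ)) ^ (4*k+10) = 1 := Even.neg_one_pow ⟨2*k+5, by ring⟩
      rw [this, mul_one]

end Parity

section Work3

variable {n : ℕ}

lemma symmDiff_single_notmem {s : Finset (Fin n)} {i : Fin n} (h : i ∉ s) :
    s ∆ {i} = insert i s := by
  ext j
  simp only [Finset.mem_symmDiff, Finset.mem_singleton, Finset.mem_insert]
  by_cases hj : j = i
  · subst hj; simp [h]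
  · simp [hj]

lemma symmDiff_single_mem {s : Finset (Fin n)} {i : Fin n} (h : i ∈ s) :
    s ∆ {i} = s.erase i := by
  ext j
  simp only [Finset.mem_symmDiff, Finset.mem_singleton, Finset.mem_erase]
  by_cases hj : j = i
  · subst hj; simp [h]
  · simp [hj]

variable {B : LinearMap.BilinForm ℝ (Fin n → ℝ)}
  {Qf : QuadraticForm ℝ (Fin n → ℝ)}
  {b : Module.Basis (Fin n) ℝ (Fin n → ℝ)}

lemma eI_empty : eI Qf b (∅ : Finset (Fin n)) = 1 := by
  rw [eI_eq_pm, Finset.sort_empty, pm_nil]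

lemma eI_singleton (i : Fin n) : eI Qf b {i} = ι Qf (b i) := by
  rw [eI_eq_pm, Finset.sort_singleton]
  simp [pm]

variable (hQ : ∀ v, Qf v = -(B v v)) (hb : ∀ i j : Fin n, B (b i) (b j) = if i = j then 1 else 0)
include hQ hb

lemma eI_sq (s : Finset (Fin n)) :
    eI Qf b s * eI Qf b s = ((-1 : ℝ) ^ (s.card.choose 2 + s.card)) • 1 := by
  set l := s.sort (· ≤ ·) with hl
  have hnd : l.Nodup := Finset.sort_nodup s _
  have hlen : l.length = s.card := Finset.length_sort _
  have ht := L_telescope hQ hb (b := b) l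
  rw [L_rev hQ hb hnd, mul_smul_comm] at ht
  have := congrArg (fun x => ((-1:ℝ) ^ (l.length.choose 2)) • x) ht
  simp only [smul_smul, ← pow_add] at this
  rw [show l.length.choose 2 + l.length.choose 2 = 2 * (l.length.choose 2) by ring] at this
  rw [pow_mul, neg_one_sq, one_pow, one_smul] at this
  rw [eI_eq_pm, ← hl, this, hlen]

lemma cconj_eI (s : Finset (Fin n)) :
    cconj Qf (eI Qf b s) = ((-1 : ℝ) ^ (s.card.choose 2 + s.card)) • eI Qf b s := by
  set l := s.sort (· ≤ ·) with hl
  have hnd : l.Nodup := Finset.sort_nodup s _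
  have hlen : l.length = s.card := Finset.length_sort _
  rw [eI_eq_pm, ← hl, cconj_pm hQ hb, L_rev hQ hb hnd, smul_smul, ← pow_add, hlen, Nat.add_comm]

lemma eI_mul_cconj_self (s : Finset (Fin n)) :
    eI Qf b s * cconj Qf (eI Qf b s) = 1 := by
  set l := s.sort (· ≤ ·) with hl
  rw [eI_eq_pm, ← hl, cconj_pm hQ hb, mul_smul_comm, L_telescope hQ hb, smul_smul, ← pow_add]
  rw [show l.length + l.length = 2 * l.length by ring, pow_mul, neg_one_sq, one_pow, one_smul]

lemma eI_insert {s : Finset (Fin n)} {i : Fin n} (h : i ∉ s) :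
    ∃ c : ℝ, (c = 1 ∨ c = -1) ∧ eI Qf b (insert i s) = c • (ι Qf (b i) * eI Qf b s) := by
  have hperm : ((insert i s).sort (· ≤ ·)).Perm (i :: s.sort (· ≤ ·)) := by
    rw [← Multiset.coe_eq_coe, ← Multiset.cons_coe, Finset.sort_eq, Finset.sort_eq,
      Finset.insert_val_of_notMem h]
  obtain ⟨c, hc, he⟩ := L_perm hQ hb (b := b) hperm (Finset.sort_nodup _ _)
  exact ⟨c, hc, by rw [eI_eq_pm, he, pm_cons, eI_eq_pm]⟩

lemma F_single (i : Fin n) (s : Finset (Fin n)) :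
    ∃ c : ℝ, (c = 1 ∨ c = -1) ∧ ι Qf (b i) * eI Qf b s = c • eI Qf b (s ∆ {i}) := by
  by_cases h : i ∈ s
  · rw [symmDiff_single_mem h]
    have hni : i ∉ s.erase i := Finset.notMem_erase i s
    obtain ⟨c, hc, he⟩ := eI_insert hQ hb hni
    have hins : insert i (s.erase i) = s := Finset.insert_erase h
    rw [hins] at he
    refine ⟨-c, by rcases hc with rfl|rfl <;> norm_num, ?_⟩
    rw [he, mul_smul_comm, ← mul_assoc, msq hQ hb, neg_one_mul, neg_smul, smul_neg]
  · rw [symmDiff_single_notmem h]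
    obtain ⟨c, hc, he⟩ := eI_insert hQ hb h
    refine ⟨c, hc, ?_⟩
    rw [he, smul_smul]
    rcases hc with rfl | rfl <;> norm_num

lemma F_mul (s t : Finset (Fin n)) :
    ∃ c : ℝ, (c = 1 ∨ c = -1) ∧ eI Qf b s * eI Qf b t = c • eI Qf b (s ∆ t) := by
  induction s using Finset.induction_on with
  | empty =>
    refine ⟨1, Or.inl rfl, ?_⟩
    rw [eI_empty, one_mul, one_smul]
    congr 1
    exact (bot_symmDiff t).symm
  | @insert i s hi ih =>
    obtain ⟨c₀, hc₀, he₀⟩ := eI_insert hQ hb hi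
    obtain ⟨c₁, hc₁, he₁⟩ := ih
    obtain ⟨c₂, hc₂, he₂⟩ := F_single hQ hb i (s ∆ t)
    have hset : (insert i s) ∆ t = (s ∆ t) ∆ {i} := by
      rw [← symmDiff_single_notmem hi, symmDiff_assoc, symmDiff_assoc,
        symmDiff_comm ({i} : Finset (Fin n)) t]
    refine ⟨c₀ * c₁ * c₂, by rcases hc₀ with rfl|rfl <;> rcases hc₁ with rfl|rfl <;>
      rcases hc₂ with rfl|rfl <;> norm_num, ?_⟩
    rw [he₀, smul_mul_assoc, mul_assoc, he₁, mul_smul_comm, he₂, hset]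
    rw [smul_smul, smul_smul, mul_assoc]

end Work3

section Work4

open scoped symmDiff

variable {n : ℕ}
  {B : LinearMap.BilinForm ℝ (Fin n → ℝ)}
  {Qf : QuadraticForm ℝ (Fin n → ℝ)}
  {b : Module.Basis (Fin n) ℝ (Fin n → ℝ)}
  {bas : Module.Basis (Finset (Fin n)) ℝ (CliffordAlgebra Qf)}
  (hQ : ∀ v, Qf v = -(B v v)) (hb : ∀ i j : Fin n, B (b i) (b j) = if i = j then 1 else 0)
  (hbas : ∀ s : Finset (Fin n), bas s = eI Qf b s)

/-- `Qbar` as a bilinear map. -/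
noncomputable def Qb (Qf : QuadraticForm ℝ (Fin n → ℝ))
    (bas : Module.Basis (Finset (Fin n)) ℝ (CliffordAlgebra Qf)) :
    CliffordAlgebra Qf →ₗ[ℝ] CliffordAlgebra Qf →ₗ[ℝ] ℝ :=
  ((LinearMap.mul ℝ (CliffordAlgebra Qf)).compl₂ (cconj Qf)).compr₂ (bas.coord ∅)

lemma Qb_apply (x y : CliffordAlgebra Qf) : Qb Qf bas x y = Qbar bas x y := rfl

include hbas

lemma one_eq_bas_empty : (1 : CliffordAlgebra Qf) = bas ∅ := by
  rw [hbas, eI_empty]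

lemma smul_one_inj {c d : ℝ} (h : c • (1 : CliffordAlgebra Qf) = d • 1) : c = d := by
  have hne : (1 : CliffordAlgebra Qf) ≠ 0 := by
    rw [one_eq_bas_empty hbas]; exact bas.ne_zero ∅
  have h1 : (c - d) • (1 : CliffordAlgebra Qf) = 0 := by
    rw [sub_smul, h, sub_self]
  rcases smul_eq_zero.mp h1 with h2 | h2
  · exact sub_eq_zero.mp h2
  · exact absurd h2 hne

lemma coord_empty_eI {u : Finset (Fin n)} (hu : u ≠ ∅) :
    bas.coord ∅ (eI Qf b u) = 0 := by
  rw [← hbas, Module.Basis.coord_apply, Module.Basis.repr_self, Finsupp.single_apply, if_neg hu]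

lemma coord_empty_one : bas.coord ∅ (1 : CliffordAlgebra Qf) = 1 := by
  rw [one_eq_bas_empty hbas, Module.Basis.coord_apply, Module.Basis.repr_self, Finsupp.single_eq_same]

include hQ hb

lemma manti_key {s : Finset (Fin n)} {i : Fin n}
    (hcond : (s.card % 4 = 1 ∧ i ∉ s) ∨ (s.card % 4 = 2 ∧ i ∈ s)) :
    ∃ d : ℝ, d ≠ 0 ∧
      eI Qf b s * ι Qf (b i) - ι Qf (b i) * eI Qf b s = d • eI Qf b (s ∆ {i}) := by
  obtain ⟨c₁, hc₁, he₁⟩ := F_single hQ hb i s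
  obtain ⟨c₂, hc₂, he₂'⟩ := F_mul hQ hb s {i}
  have he₂ : eI Qf b s * ι Qf (b i) = c₂ • eI Qf b (s ∆ {i}) := by
    rw [← eI_singleton (Qf := Qf) (b := b) i]; exact he₂'
  have hσs : eI Qf b s * eI Qf b s = (-1 : ℝ) • 1 := by
    rw [eI_sq hQ hb, sign4]
    rcases hcond with ⟨h1, _⟩ | ⟨h1, _⟩ <;> simp [h1]
  have hcards : (s ∆ {i}).card % 4 = 1 ∨ (s ∆ {i}).card % 4 = 2 := by
    rcases hcond with ⟨h1, h2⟩ | ⟨h1, h2⟩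
    · rw [symmDiff_single_notmem h2, Finset.card_insert_of_notMem h2]; omega
    · rw [symmDiff_single_mem h2, Finset.card_erase_of_mem h2]
      have h3 : 2 ≤ s.card := by omega
      omega
  have hσu : eI Qf b (s ∆ {i}) * eI Qf b (s ∆ {i}) = (-1 : ℝ) • 1 := by
    rw [eI_sq hQ hb, sign4, if_pos hcards]
  have hprod : (ι Qf (b i) * eI Qf b s) * (eI Qf b s * ι Qf (b i)) = (1 : ℝ) • 1 := by
    have : (ι Qf (b i) * eI Qf b s) * (eI Qf b s * ι Qf (b i))
        = ι Qf (b i) * ((eI Qf b s * eI Qf b s) * ι Qf (b i)) := by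
      rw [mul_assoc, mul_assoc]
    rw [this, hσs, smul_mul_assoc, one_mul, mul_smul_comm, msq hQ hb]
    simp
  rw [he₁, he₂] at hprod
  rw [smul_mul_assoc, mul_smul_comm, smul_smul, hσu, smul_smul] at hprod
  have hcc := smul_one_inj hbas hprod
  have hc12 : c₁ = -c₂ := by
    rcases hc₁ with rfl | rfl <;> rcases hc₂ with rfl | rfl <;> norm_num at *
  refine ⟨c₂ - c₁, by rcases hc₂ with rfl | rfl <;> rw [hc12] <;> norm_num, ?_⟩
  rw [he₁, he₂, ← sub_smul]

lemma Qbar_eI_self (s : Finset (Fin n)) :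
    Qbar bas (eI Qf b s) (eI Qf b s) = 1 := by
  unfold Qbar
  rw [eI_mul_cconj_self hQ hb, coord_empty_one hbas]

lemma Qbar_eI_eI (s t : Finset (Fin n)) :
    Qbar bas (eI Qf b s) (eI Qf b t) = if s = t then 1 else 0 := by
  by_cases hst : s = t
  · rw [if_pos hst, hst, Qbar_eI_self hQ hb hbas]
  · rw [if_neg hst]
    unfold Qbar
    obtain ⟨c, hc, he⟩ := F_mul hQ hb s t
    rw [cconj_eI hQ hb, mul_smul_comm, he, map_smul, map_smul, smul_eq_mul, smul_eq_mul]
    rw [coord_empty_eI hbas (by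
      intro h
      exact hst (symmDiff_eq_bot.mp (by rw [← Finset.bot_eq_empty] at h; exact h)))]
    ring

lemma Qbar_eq_sum (x y : CliffordAlgebra Qf) :
    Qbar bas x y = ∑ s : Finset (Fin n), (bas.repr x s) * (bas.repr y s) := by
  rw [← Qb_apply]
  nth_rewrite 1 [← bas.sum_repr x]
  nth_rewrite 1 [← bas.sum_repr y]
  simp only [map_sum, LinearMap.sum_apply, map_smul, LinearMap.smul_apply, smul_eq_mul]
  have hQbb : ∀ u v : Finset (Fin n), Qb Qf bas (bas u) (bas v) = if u = v then 1 else 0 := by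
    intro u v
    rw [Qb_apply, hbas u, hbas v]
    exact Qbar_eI_eI hQ hb hbas u v
  refine Finset.sum_congr rfl fun s _ => ?_
  simp [hQbb, mul_ite, Finset.sum_ite_eq, Finset.sum_ite_eq', mul_comm, mul_left_comm]

lemma Qbar_self_nonneg (x : CliffordAlgebra Qf) : 0 ≤ Qbar bas x x := by
  rw [Qbar_eq_sum hQ hb hbas]
  exact Finset.sum_nonneg fun s _ => mul_self_nonneg _

lemma Qbar_self_pos {x : CliffordAlgebra Qf} (hx : x ≠ 0) : 0 < Qbar bas x x := by
  rw [Qbar_eq_sum hQ hb hbas]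
  have hr : bas.repr x ≠ 0 := by
    intro h
    apply hx
    have h2 := congrArg bas.repr.symm h
    simpa using h2
  obtain ⟨s₀, hs₀⟩ := Finsupp.ne_iff.mp hr
  refine Finset.sum_pos' (fun s _ => mul_self_nonneg _) ⟨s₀, Finset.mem_univ _, ?_⟩
  have hne : bas.repr x s₀ ≠ 0 := by simpa using hs₀
  exact mul_self_pos.mpr hne

lemma p_comm (x y : CliffordAlgebra Qf) :
    bas.coord ∅ (x * y) = bas.coord ∅ (y * x) := by
  have key : ((LinearMap.mul ℝ (CliffordAlgebra Qf)).compr₂ (bas.coord ∅)) =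
      ((LinearMap.mul ℝ (CliffordAlgebra Qf)).compr₂ (bas.coord ∅)).flip := by
    apply Module.Basis.ext bas
    intro s
    apply Module.Basis.ext bas
    intro t
    show bas.coord ∅ (bas s * bas t) = bas.coord ∅ (bas t * bas s)
    by_cases hst : s = t
    · rw [hst]
    · obtain ⟨c, hc, he⟩ := F_mul hQ hb s t
      obtain ⟨c', hc', he'⟩ := F_mul hQ hb t s
      rw [hbas, hbas, he, he', symmDiff_comm t s, map_smul, map_smul]
      have h0 : bas.coord ∅ (eI Qf b (s ∆ t)) = 0 := coord_empty_eI hbas (by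
        intro h
        exact hst (symmDiff_eq_bot.mp (by rw [← Finset.bot_eq_empty] at h; exact h)))
      rw [h0]; simp
  exact LinearMap.congr_fun (LinearMap.congr_fun key x) y

lemma skew_adj {ξ : CliffordAlgebra Qf} (hξ : cconj Qf ξ = -ξ) (x y : CliffordAlgebra Qf) :
    Qbar bas (ξ * x - x * ξ) y = - Qbar bas x (ξ * y - y * ξ) := by
  have h1 : cconj Qf (ξ * y - y * ξ) = ξ * cconj Qf y - cconj Qf y * ξ := by
    rw [map_sub, cconj_mul hQ hb, cconj_mul hQ hb, hξ]
    noncomm_ring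
  unfold Qbar
  rw [h1, sub_mul, mul_sub, map_sub, map_sub]
  have hp : bas.coord ∅ (ξ * (x * cconj Qf y)) = bas.coord ∅ ((x * cconj Qf y) * ξ) :=
    p_comm hQ hb hbas _ _
  simp only [mul_assoc] at hp ⊢
  rw [hp]
  ring

end Work4

section Work5

open scoped symmDiff

variable {n : ℕ}
  {B : LinearMap.BilinForm ℝ (Fin n → ℝ)}
  {Qf : QuadraticForm ℝ (Fin n → ℝ)}
  {b : Module.Basis (Fin n) ℝ (Fin n → ℝ)}
  {bas : Module.Basis (Finset (Fin n)) ℝ (CliffordAlgebra Qf)}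
  (hQ : ∀ v, Qf v = -(B v v)) (hb : ∀ i j : Fin n, B (b i) (b j) = if i = j then 1 else 0)
  (hbas : ∀ s : Finset (Fin n), bas s = eI Qf b s)

include hQ hb

lemma cconj_eI_of_cond {s : Finset (Fin n)} (h : s.card % 4 = 1 ∨ s.card % 4 = 2) :
    cconj Qf (eI Qf b s) = -(eI Qf b s) := by
  rw [cconj_eI hQ hb, sign4, if_pos h, neg_smul, one_smul]

lemma cconj_eI_of_notcond {s : Finset (Fin n)} (h : ¬(s.card % 4 = 1 ∨ s.card % 4 = 2)) :
    cconj Qf (eI Qf b s) = eI Qf b s := by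
  rw [cconj_eI hQ hb, sign4, if_neg h, one_smul]

lemma eI_mem_Gsub {s : Finset (Fin n)} (h : s.card % 4 = 1 ∨ s.card % 4 = 2) :
    eI Qf b s ∈ Gsub Qf := by
  rw [Gsub, LinearMap.mem_ker, LinearMap.add_apply, LinearMap.id_apply,
    cconj_eI_of_cond hQ hb h, neg_add_cancel]

include hbas

lemma repr_cconj_eq {s : Finset (Fin n)} (hs : ¬(s.card % 4 = 1 ∨ s.card % 4 = 2))
    (x : CliffordAlgebra Qf) : bas.repr (cconj Qf x) s = bas.repr x s := by
  have key : (bas.coord s) ∘ₗ (cconj Qf) = bas.coord s := by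
    apply Module.Basis.ext bas
    intro t
    simp only [LinearMap.comp_apply]
    by_cases hts : t = s
    · subst hts
      rw [hbas t, cconj_eI_of_notcond hQ hb hs]
    · rw [hbas t, cconj_eI hQ hb, map_smul, ← hbas t, Module.Basis.coord_apply, Module.Basis.repr_self,
        Finsupp.single_apply, if_neg hts]
      simp
  have := LinearMap.congr_fun key x
  simpa [Module.Basis.coord_apply] using this

lemma mem_Gsub_iff (x : CliffordAlgebra Qf) : x ∈ Gsub Qf ↔ cconj Qf x = -x := by
  rw [Gsub, LinearMap.mem_ker, LinearMap.add_apply, LinearMap.id_apply]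
  constructor
  · exact fun h => eq_neg_of_add_eq_zero_left h
  · intro h; rw [h, neg_add_cancel]

end Work5

section Work6

open scoped symmDiff

variable {n : ℕ}
  (B : LinearMap.BilinForm ℝ (Fin n → ℝ))
  (Qf : QuadraticForm ℝ (Fin n → ℝ))
  (b : Module.Basis (Fin n) ℝ (Fin n → ℝ))
  (bas : Module.Basis (Finset (Fin n)) ℝ (CliffordAlgebra Qf))
  (hQ : ∀ v, Qf v = -(B v v)) (hb : ∀ i j : Fin n, B (b i) (b j) = if i = j then 1 else 0)
  (hbas : ∀ s : Finset (Fin n), bas s = eI Qf b s)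

include hQ hb hbas

lemma part2
    (ad : CliffordAlgebra Qf → (Gsub Qf →ₗ[ℝ] Gsub Qf))
    (had : ∀ (ξ : CliffordAlgebra Qf) (x : Gsub Qf),
      ((ad ξ x : CliffordAlgebra Qf)) = ξ * (x : CliffordAlgebra Qf) - (x : CliffordAlgebra Qf) * ξ)
    (ξ : CliffordAlgebra Qf)
    (hmem : ξ ∈ Submodule.span ℝ
        (eI Qf b '' {s : Finset (Fin n) | (s.card % 4 = 1 ∨ s.card % 4 = 2) ∧ s ≠ Finset.univ}))
    (hξ0 : ξ ≠ 0) : LinearMap.trace ℝ (Gsub Qf) (ad ξ ∘ₗ ad ξ) < 0 := by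
  classical
  -- ξ lies in G
  have hξG : ξ ∈ Gsub Qf := by
    refine Submodule.span_le.mpr ?_ hmem
    rintro _ ⟨s, hs, rfl⟩
    exact eI_mem_Gsub hQ hb hs.1
  have hξc : cconj Qf ξ = -ξ := (mem_Gsub_iff hQ hb hbas ξ).mp hξG
  -- the basis of G indexed by admissible multi-indices
  set P : Finset (Fin n) → Prop := fun s => s.card % 4 = 1 ∨ s.card % 4 = 2 with hP
  have hPdec : DecidablePred P := fun s => by rw [hP]; infer_instance
  let v : {s // P s} → CliffordAlgebra Qf := fun s => bas s.val
  have hli : LinearIndependent ℝ v :=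
    bas.linearIndependent.comp Subtype.val Subtype.val_injective
  set W : Submodule ℝ (CliffordAlgebra Qf) := Submodule.span ℝ (Set.range v) with hW
  have hWG : W = Gsub Qf := by
    apply le_antisymm
    · rw [hW]
      refine Submodule.span_le.mpr ?_
      rintro _ ⟨s, rfl⟩
      show bas s.val ∈ Gsub Qf
      rw [hbas]
      exact eI_mem_Gsub hQ hb s.2
    · intro x hx
      have hcx : cconj Qf x = -x := (mem_Gsub_iff hQ hb hbas x).mp hx
      rw [← bas.sum_repr x]
      refine Submodule.sum_mem _ fun s _ => ?_
      by_cases hs : P s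
      · exact Submodule.smul_mem _ _ (Submodule.subset_span ⟨⟨s, hs⟩, rfl⟩)
      · have h0 : bas.repr x s = 0 := by
          have h1 := repr_cconj_eq hQ hb hbas hs x
          rw [hcx, map_neg] at h1
          have h2 : -(bas.repr x s) = bas.repr x s := by
            simpa using h1
          linarith
        rw [h0, zero_smul]
        exact Submodule.zero_mem _
  let bG : Module.Basis {s // P s} ℝ (Gsub Qf) := (Module.Basis.span hli).map (LinearEquiv.ofEq _ _ hWG)
  have hbG : ∀ s : {s // P s}, (bG s : CliffordAlgebra Qf) = bas s.val := by
    intro s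
    show ((LinearEquiv.ofEq _ _ hWG) ((Module.Basis.span hli) s) : CliffordAlgebra Qf) = bas s.val
    have h1 : (((Module.Basis.span hli) s : W) : CliffordAlgebra Qf) = v s := congrArg Subtype.val (Module.Basis.span_apply hli s)
    simpa [v] using h1
  -- diagonal entries of a map on G are Qbar-values
  have hrepr : ∀ (y : Gsub Qf) (s : {s // P s}),
      bG.repr y s = Qbar bas (y : CliffordAlgebra Qf) (bas s.val) := by
    intro y s
    have key : (bG.coord s) =
        (((Qb Qf bas).flip (bas s.val)) ∘ₗ (Gsub Qf).subtype) := by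
      apply Module.Basis.ext bG
      intro t
      rw [Module.Basis.coord_apply, Module.Basis.repr_self]
      simp only [LinearMap.comp_apply, Submodule.coe_subtype, LinearMap.flip_apply]
      rw [hbG t, Qb_apply, hbas t.val, hbas s.val, Qbar_eI_eI hQ hb hbas]
      rw [Finsupp.single_apply]
      by_cases hts : t = s
      · rw [if_pos hts, if_pos (by rw [hts])]
      · rw [if_neg hts, if_neg (fun h => hts (Subtype.ext h))]
    have := LinearMap.congr_fun key y
    simpa [Module.Basis.coord_apply, Qb_apply] using this
  -- trace as a sum of diagonal entries
  have htr : LinearMap.trace ℝ (Gsub Qf) (ad ξ ∘ₗ ad ξ)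
      = ∑ s : {s // P s}, bG.repr ((ad ξ ∘ₗ ad ξ) (bG s)) s := by
    rw [LinearMap.trace_eq_matrix_trace ℝ bG, Matrix.trace]
    refine Finset.sum_congr rfl fun s _ => ?_
    rw [Matrix.diag, LinearMap.toMatrix_apply]
  -- each diagonal entry is -Qbar z z
  have hdiag : ∀ s : {s // P s}, bG.repr ((ad ξ ∘ₗ ad ξ) (bG s)) s
      = - Qbar bas ((ad ξ (bG s) : CliffordAlgebra Qf)) ((ad ξ (bG s) : CliffordAlgebra Qf)) := by
    intro s
    rw [LinearMap.comp_apply, hrepr]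
    set z : CliffordAlgebra Qf := (ad ξ (bG s) : CliffordAlgebra Qf) with hz
    rw [had ξ (ad ξ (bG s)), ← hz]
    rw [skew_adj hQ hb hbas hξc]
    congr 1
    rw [hz, had ξ (bG s), hbG s]
  rw [htr]
  -- the distinguished index i
  have hsupp : ∀ s : Finset (Fin n),
      s ∉ {s : Finset (Fin n) | (s.card % 4 = 1 ∨ s.card % 4 = 2) ∧ s ≠ Finset.univ} →
      bas.repr ξ s = 0 := by
    intro s hs
    have himg : eI Qf b '' {s : Finset (Fin n) | (s.card % 4 = 1 ∨ s.card % 4 = 2) ∧ s ≠ Finset.univ}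
        = bas '' {s : Finset (Fin n) | (s.card % 4 = 1 ∨ s.card % 4 = 2) ∧ s ≠ Finset.univ} := by
      refine Set.image_congr fun t _ => (hbas t).symm
    rw [himg] at hmem
    have := bas.mem_span_image.mp hmem
    by_contra hne
    exact hs (this (by simp [Finsupp.mem_support_iff, hne]))
  obtain ⟨s₀, hs₀⟩ : ∃ s₀, bas.repr ξ s₀ ≠ 0 := by
    by_contra h
    push_neg at h
    apply hξ0
    have : bas.repr ξ = 0 := Finsupp.ext fun s => h s
    have h2 := congrArg bas.repr.symm this
    simpa using h2
  have hs₀mem : (s₀.card % 4 = 1 ∨ s₀.card % 4 = 2) ∧ s₀ ≠ Finset.univ := by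
    by_contra h
    exact hs₀ (hsupp s₀ h)
  -- choose i making e_i anticommute with e_{s₀}
  obtain ⟨i, hi⟩ : ∃ i : Fin n,
      (s₀.card % 4 = 1 ∧ i ∉ s₀) ∨ (s₀.card % 4 = 2 ∧ i ∈ s₀) := by
    rcases hs₀mem.1 with h1 | h1
    · obtain ⟨i, hi⟩ : ∃ i, i ∉ s₀ := by
        by_contra h
        push_neg at h
        exact hs₀mem.2 (Finset.eq_univ_iff_forall.mpr h)
      exact ⟨i, Or.inl ⟨h1, hi⟩⟩
    · obtain ⟨i, hi⟩ : ∃ i, i ∈ s₀ := by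
        have : 0 < s₀.card := by omega
        obtain ⟨i, hi⟩ := Finset.card_pos.mp this
        exact ⟨i, hi⟩
      exact ⟨i, Or.inr ⟨h1, hi⟩⟩
  -- the commutator with e_i is nonzero
  set D : CliffordAlgebra Qf →ₗ[ℝ] CliffordAlgebra Qf :=
    LinearMap.mulRight ℝ (ι Qf (b i)) - LinearMap.mulLeft ℝ (ι Qf (b i)) with hD
  have hDx : ∀ x : CliffordAlgebra Qf, D x = x * ι Qf (b i) - ι Qf (b i) * x := by
    intro x
    rw [hD]
    simp [LinearMap.mulRight_apply, LinearMap.mulLeft_apply]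
  have hDne : D ξ ≠ 0 := by
    set u₀ : Finset (Fin n) := s₀ ∆ {i} with hu₀
    obtain ⟨d, hd0, hdeq⟩ := manti_key hQ hb hbas hi
    have hexp : bas.repr (D ξ) u₀ = bas.repr ξ s₀ * d := by
      conv_lhs => rw [← bas.sum_repr ξ, map_sum, map_sum]
      rw [Finset.sum_apply']
      have hterm : ∀ s : Finset (Fin n),
          bas.repr (D ((bas.repr ξ s) • bas s)) u₀
          = if s = s₀ then bas.repr ξ s₀ * d else 0 := by
        intro s
        rw [map_smul, map_smul]
        by_cases hss : s = s₀
        · subst hss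
          rw [if_pos rfl, hbas s, hDx, hdeq, map_smul, ← hbas (s ∆ {i})]
          rw [Module.Basis.repr_self, hu₀]
          simp [Finsupp.single_eq_same, smul_eq_mul, mul_comm]
        · rw [if_neg hss, hbas s, hDx]
          obtain ⟨c₁, _, he₁⟩ := F_single hQ hb i s
          obtain ⟨c₂, _, he₂'⟩ := F_mul hQ hb s {i}
          have he₂ : eI Qf b s * ι Qf (b i) = c₂ • eI Qf b (s ∆ {i}) := by
            rw [← eI_singleton (Qf := Qf) (b := b) i]; exact he₂'
          rw [he₁, he₂, ← sub_smul, map_smul, ← hbas (s ∆ {i}), Module.Basis.repr_self]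
          have hne : s ∆ {i} ≠ u₀ := by
            rw [hu₀]
            intro h
            exact hss (symmDiff_left_injective _ h)
          simp [Finsupp.single_apply, hne, Finsupp.smul_apply]
      rw [Finset.sum_congr rfl fun s _ => hterm s]
      simp
    intro h
    rw [h] at hexp
    simp only [map_zero, Finsupp.coe_zero, Pi.zero_apply] at hexp
    exact hd0 (by
      rcases mul_eq_zero.mp hexp.symm with h' | h'
      · exact absurd h' hs₀
      · exact h')
  -- the distinguished basis vector {i}
  have hPi : P {i} := by
    rw [hP]
    left
    rw [Finset.card_singleton]
  set sstar : {s // P s} := ⟨{i}, hPi⟩ with hsstar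
  have hzstar : ((ad ξ (bG sstar)) : CliffordAlgebra Qf) = D ξ := by
    rw [had ξ (bG sstar), hbG sstar, hDx]
    rw [hsstar, hbas, eI_singleton]
  -- conclude
  have hle : ∀ s : {s // P s}, bG.repr ((ad ξ ∘ₗ ad ξ) (bG s)) s ≤ 0 := by
    intro s
    rw [hdiag s]
    have := Qbar_self_nonneg hQ hb hbas (x := ((ad ξ (bG s)) : CliffordAlgebra Qf))
    linarith
  have hlt : bG.repr ((ad ξ ∘ₗ ad ξ) (bG sstar)) sstar < 0 := by
    rw [hdiag sstar]
    have hzne : ((ad ξ (bG sstar)) : CliffordAlgebra Qf) ≠ 0 := by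
      rw [hzstar]; exact hDne
    have := Qbar_self_pos hQ hb hbas hzne
    linarith
  calc ∑ s : {s // P s}, bG.repr ((ad ξ ∘ₗ ad ξ) (bG s)) s
      < ∑ _s : {s // P s}, (0 : ℝ) :=
        Finset.sum_lt_sum (fun s _ => hle s) ⟨sstar, Finset.mem_univ _, hlt⟩
    _ = 0 := by simp

end Work6

theorem stmt19 {n : ℕ}
    (B : LinearMap.BilinForm ℝ (Fin n → ℝ))
    (hB : ∀ v w : Fin n → ℝ, B v w = ∑ i, v i * w i)
    (Qf : QuadraticForm ℝ (Fin n → ℝ)) (hQ : ∀ v, Qf v = -(B v v))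
    (b : Module.Basis (Fin n) ℝ (Fin n → ℝ))
    (hb : ∀ i j : Fin n, B (b i) (b j) = if i = j then 1 else 0)
    (bas : Module.Basis (Finset (Fin n)) ℝ (CliffordAlgebra Qf))
    (hbas : ∀ s : Finset (Fin n), bas s = eI Qf b s)
    (ad : CliffordAlgebra Qf → (Gsub Qf →ₗ[ℝ] Gsub Qf))
    (had : ∀ (ξ : CliffordAlgebra Qf) (x : Gsub Qf),
      ((ad ξ x : CliffordAlgebra Qf)) = ξ * (x : CliffordAlgebra Qf) - (x : CliffordAlgebra Qf) * ξ) :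
    (∀ s : Finset (Fin n), (s.card % 4 = 1 ∨ s.card % 4 = 2) → s ≠ Finset.univ →
      eI Qf b s * eI Qf b s = -1 ∧ Qbar bas (eI Qf b s) (eI Qf b s) = 1) ∧
    (∀ ξ ∈ Submodule.span ℝ
        (eI Qf b '' {s : Finset (Fin n) | (s.card % 4 = 1 ∨ s.card % 4 = 2) ∧ s ≠ Finset.univ}),
      ξ ≠ 0 → LinearMap.trace ℝ (Gsub Qf) (ad ξ ∘ₗ ad ξ) < 0) ∧
    (∀ ξ ∈ Submodule.span ℝ
        (eI Qf b '' {s : Finset (Fin n) | (s.card % 4 = 1 ∨ s.card % 4 = 2) ∧ s ≠ Finset.univ}),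
      ξ ≠ 0 → 0 < Qbar bas ξ ξ) := by
  refine ⟨?_, ?_, ?_⟩
  · intro s hs _
    constructor
    · rw [eI_sq hQ hb, sign4, if_pos hs, neg_smul, one_smul]
    · exact Qbar_eI_self hQ hb hbas s
  · intro ξ hmem hξ0
    exact part2 B Qf b bas hQ hb hbas ad had ξ hmem hξ0
  · intro ξ _ hξ0
    exact Qbar_self_pos hQ hb hbas hξ0
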